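/- Under the same assumptions, for all i ≥ 1 and 1 ≤ j ≤ K, the one-step recursion estimate holds: ((M_{σ_i}e_j)(e_j))^{1/2} ≤ ρ·((M_{σ_i}e_{j−1})(e_{j−1}))^{1/2} + (β/√r)·‖B‖_{L(U,Λ')}·L·ζ^{−i}, where e_j := λ_{σ_i} − λ_{σ_i}^{(j)}. -/

import Mathlib

lemma my_cs {V : Type*} [NormedAddCommGroup V] [NormedSpace ℝ V]
    (Φ : V →L[ℝ] V →L[ℝ] ℝ) (hsymm : ∀ x y, Φ x y = Φ y x)
    (r : ℝ) (hr : 0 < r) (hcoer : ∀ x, r * ‖x‖ ^ 2 ≤ Φ x x)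
    (x y : V) : (Φ x y) ^ 2 ≤ Φ x x * Φ y y := by
  by_cases hy : y = 0
  · simp [hy]
  · have hy' : 0 < ‖y‖ := norm_pos_iff.mpr hy
    have hyy : 0 < Φ y y := lt_of_lt_of_le (by positivity) (hcoer y)
    have h0 := le_trans (by positivity) (hcoer (x - (Φ x y / Φ y y) • y))
    have hexp : Φ (x - (Φ x y / Φ y y) • y) (x - (Φ x y / Φ y y) • y)
        = Φ x x - (Φ x y)^2 / Φ y y := by
      simp only [map_sub, map_smul, ContinuousLinearMap.sub_apply,
        ContinuousLinearMap.smul_apply, smul_eq_mul, hsymm y x]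
      field_simp
      ring
    rw [hexp] at h0
    have := (div_le_iff₀ hyy).mp (by linarith : (Φ x y)^2 / Φ y y ≤ Φ x x)
    linarith

lemma my_tri {V : Type*} [NormedAddCommGroup V] [NormedSpace ℝ V]
    (Φ : V →L[ℝ] V →L[ℝ] ℝ) (hsymm : ∀ x y, Φ x y = Φ y x)
    (r : ℝ) (hr : 0 < r) (hcoer : ∀ x, r * ‖x‖ ^ 2 ≤ Φ x x)
    (x y : V) :
    Real.sqrt (Φ (x + y) (x + y)) ≤ Real.sqrt (Φ x x) + Real.sqrt (Φ y y) := by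
  have hxx : 0 ≤ Φ x x := le_trans (by positivity) (hcoer x)
  have hyy : 0 ≤ Φ y y := le_trans (by positivity) (hcoer y)
  have hxy : Φ x y ≤ Real.sqrt (Φ x x) * Real.sqrt (Φ y y) := by
    calc Φ x y ≤ Real.sqrt ((Φ x y)^2) := by
          rw [Real.sqrt_sq_eq_abs]; exact le_abs_self _
      _ ≤ Real.sqrt (Φ x x * Φ y y) :=
          Real.sqrt_le_sqrt (my_cs Φ hsymm r hr hcoer x y)
      _ = Real.sqrt (Φ x x) * Real.sqrt (Φ y y) := Real.sqrt_mul hxx _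
  have hexp : Φ (x + y) (x + y) = Φ x x + 2 * Φ x y + Φ y y := by
    simp only [map_add, ContinuousLinearMap.add_apply, hsymm y x]
    ring
  rw [hexp]
  have sx := Real.sq_sqrt hxx
  have sy := Real.sq_sqrt hyy
  have hb : Φ x x + 2 * Φ x y + Φ y y ≤ (Real.sqrt (Φ x x) + Real.sqrt (Φ y y))^2 := by
    nlinarith
  calc Real.sqrt (Φ x x + 2 * Φ x y + Φ y y)
      ≤ Real.sqrt ((Real.sqrt (Φ x x) + Real.sqrt (Φ y y))^2) := Real.sqrt_le_sqrt hb
    _ = Real.sqrt (Φ x x) + Real.sqrt (Φ y y) := Real.sqrt_sq (by positivity)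

set_option maxHeartbeats 2000000 in
set_option synthInstance.maxHeartbeats 1000000 in
theorem stmt_16'
    {U Λ : Type*} [NormedAddCommGroup U] [InnerProductSpace ℝ U] [CompleteSpace U]
    [NormedAddCommGroup Λ] [InnerProductSpace ℝ Λ] [CompleteSpace Λ]
    (Ca α Cb β₀ : ℝ) (hα : 0 < α) (hβ₀ : 0 < β₀)
    (a : U →L[ℝ] U →L[ℝ] ℝ) (b : U →L[ℝ] Λ →L[ℝ] ℝ)
    (ha_bdd : ∀ u v, |a u v| ≤ Ca * ‖u‖ * ‖v‖)
    (ha_symm : ∀ u v, a u v = a v u)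
    (ha_coer : ∀ v, α * ‖v‖ ^ 2 ≤ a v v)
    (hb_bdd : ∀ v μ, |b v μ| ≤ Cb * ‖v‖ * ‖μ‖)
    (hb_infsup : ∀ μ : Λ, β₀ * ‖μ‖ ≤ ⨆ w : U, b w μ / ‖w‖)
    (Ainv : (U →L[ℝ] ℝ) →L[ℝ] U)
    (hAinv : ∀ (φ : U →L[ℝ] ℝ) (v : U), a (Ainv φ) v = φ v)
    (f : U →L[ℝ] ℝ) (g : Λ →L[ℝ] ℝ) (u₀ : U) (lam : Λ)
    (hsol : ∀ (v : U) (μ : Λ), a u₀ v + b v lam + b u₀ μ = f v - g μ)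
    (Λσ : ℕ → Submodule ℝ Λ)
    (hclosed : ∀ i, IsClosed ((Λσ i : Set Λ)))
    (hbot : Λσ 0 = ⊥)
    (hnested : ∀ i, Λσ i ≤ Λσ (i + 1))
    (lamσ : ℕ → Λ) (hlamσmem : ∀ i, lamσ i ∈ Λσ i)
    (hGal : ∀ i, ∀ μ ∈ Λσ i, b (Ainv (b.flip (lamσ i))) μ = b (Ainv (b.flip lam)) μ)
    (r R : ℝ) (hr : 0 < r) (hrR : r ≤ R)
    (Mp : (i : ℕ) → (Λσ i) →L[ℝ] (Λσ i) →L[ℝ] ℝ)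
    (hMsymm : ∀ i, 1 ≤ i → ∀ μ ν : Λσ i, Mp i μ ν = Mp i ν μ)
    (hMbdd : ∀ i, 1 ≤ i → ∀ μ : Λσ i, r * ‖μ‖ ^ 2 ≤ Mp i μ μ ∧ Mp i μ μ ≤ R * ‖μ‖ ^ 2)
    (Minv : (i : ℕ) → ((Λσ i) →L[ℝ] ℝ) →L[ℝ] (Λσ i))
    (hMinv : ∀ i, 1 ≤ i → ∀ (ψ : (Λσ i) →L[ℝ] ℝ) (μ : Λσ i), Mp i (Minv i ψ) μ = ψ μ)
    (β ρ : ℝ) (hβ : 0 < β) (hρ0 : 0 < ρ) (hρ1 : ρ < 1)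
    (hcontract : ∀ i, 1 ≤ i → ∀ μ : Λσ i,
        Real.sqrt (Mp i (μ - β • Minv i ((b (Ainv (b.flip (μ : Λ)))).comp (Λσ i).subtypeL))
            (μ - β • Minv i ((b (Ainv (b.flip (μ : Λ)))).comp (Λσ i).subtypeL)))
          ≤ ρ * Real.sqrt (Mp i μ μ))
    (ζ L : ℝ) (hζ : 1 < ζ) (hL : 0 < L)
    (happrox : ∀ i, ‖lam - lamσ i‖ ≤ L * (ζ ^ i)⁻¹)
    (K : ℕ) (uapp : ℕ → ℕ → U) (lamit : ℕ → ℕ → Λ)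
    (hlamit0 : lamit 0 K = 0)
    (hlamitmem : ∀ i, 1 ≤ i → ∀ j ≤ K, lamit i j ∈ Λσ i)
    (hlamitinit : ∀ i, 1 ≤ i → lamit i 0 = lamit (i - 1) K)
    (huapp : ∀ i, 1 ≤ i → ∀ j < K,
        ‖Ainv (f - b.flip (lamit i j)) - uapp i j‖ ≤ L * (ζ ^ i)⁻¹)
    (hlamitstep : ∀ i, 1 ≤ i → ∀ j < K,
        lamit i (j + 1)
          = lamit i j + ((β • Minv i ((b (uapp i j) + g).comp (Λσ i).subtypeL) : Λσ i) : Λ)) :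
    ∀ i, 1 ≤ i → ∀ j < K, ∀ ej ej1 : Λσ i,
      (ej : Λ) = lamσ i - lamit i j → (ej1 : Λ) = lamσ i - lamit i (j + 1) →
      Real.sqrt (Mp i ej1 ej1)
        ≤ ρ * Real.sqrt (Mp i ej ej) + (β / Real.sqrt r) * ‖b‖ * (L * (ζ ^ i)⁻¹) := by
  intro i hi j hj ej ej1 hej hej1
  have hMs := hMsymm i hi
  have hMc : ∀ μ : Λσ i, r * ‖μ‖ ^ 2 ≤ Mp i μ μ := fun μ => (hMbdd i hi μ).1
  -- the exact solution facts
  have hu0a : ∀ v, a u₀ v = f v - b v lam := by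
    intro v; have h := hsol v 0; simp only [map_zero] at h; linarith
  have hg0 : ∀ μ, b u₀ μ = -g μ := by
    intro μ; have h := hsol 0 μ
    simp only [map_zero, ContinuousLinearMap.zero_apply] at h; linarith
  have uniq : ∀ x y : U, (∀ v, a x v = a y v) → x = y := by
    intro x y h
    have h1 : a (x - y) (x - y) = 0 := by
      simp only [map_sub, ContinuousLinearMap.sub_apply, h]; ring
    have h2 := ha_coer (x - y)
    rw [h1] at h2
    have h3 : ‖x - y‖ ^ 2 = 0 := le_antisymm (by nlinarith) (sq_nonneg _)
    have h4 : x - y = 0 := norm_eq_zero.mp (by nlinarith [norm_nonneg (x - y)])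
    exact sub_eq_zero.mp h4
  have hA0 : Ainv (f - b.flip lam) = u₀ := by
    apply uniq
    intro v
    rw [hAinv, hu0a v]
    simp [ContinuousLinearMap.sub_apply, ContinuousLinearMap.flip_apply]
  set χ := lamit i j with hχ
  set ulam := Ainv (f - b.flip χ) with hulam
  set w := ulam - uapp i j with hwdef
  have hsplit : ulam = u₀ + Ainv (b.flip (lam - χ)) := by
    have harg : f - b.flip χ = (f - b.flip lam) + b.flip (lam - χ) := by
      rw [map_sub]; abel
    rw [hulam, harg, map_add, hA0]
  have hBkey : ∀ μ : Λσ i, b ulam (μ : Λ) + g (μ : Λ) = b (Ainv (b.flip ((ej : Λ)))) (μ : Λ) := by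
    intro μ
    have hgal := hGal i (μ : Λ) μ.2
    rw [hej, hsplit]
    simp only [map_sub, map_add, ContinuousLinearMap.sub_apply,
      ContinuousLinearMap.add_apply]
    rw [hg0 (μ : Λ), ← hgal]
    ring
  set Sψ : (Λσ i) →L[ℝ] ℝ := (b (Ainv (b.flip ((ej : Λ))))).comp (Λσ i).subtypeL with hSψ
  set d : Λσ i := β • Minv i ((b w).comp (Λσ i).subtypeL) with hd
  have hkeyfun : (b (uapp i j) + g).comp (Λσ i).subtypeL
      = Sψ - (b w).comp (Λσ i).subtypeL := by
    ext μ
    simp only [ContinuousLinearMap.comp_apply, ContinuousLinearMap.sub_apply,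
      ContinuousLinearMap.add_apply, Submodule.subtypeL_apply, hSψ, hwdef,
      map_sub]
    have h := hBkey μ
    linarith
  have hsum : ej1 = (ej - β • Minv i Sψ) + d := by
    have hMsub : Minv i ((b (uapp i j) + g).comp (Λσ i).subtypeL)
        = Minv i Sψ - Minv i ((b w).comp (Λσ i).subtypeL) := by
      rw [hkeyfun, map_sub]
    have hej' : (ej : Λ) = lamσ i - lamit i j := by rw [hej, hχ]
    apply Subtype.coe_injective
    show (ej1 : Λ) = ((ej - β • Minv i Sψ + d : Λσ i) : Λ)
    rw [hej1, hlamitstep i hi j hj, hMsub, hd]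
    push_cast
    rw [hej']
    module
  -- contraction bound
  have hν := hcontract i hi ej
  -- bound on the perturbation d
  have hw : ‖w‖ ≤ L * (ζ ^ i)⁻¹ := huapp i hi j hj
  have hdd : Mp i d d = β * b w ((d : Λ)) := by
    have hsmul : ∀ (x y : Λσ i), Mp i (β • x) y = β * Mp i x y := by
      intro x y
      rw [map_smul, ContinuousLinearMap.smul_apply, smul_eq_mul]
    conv_lhs => rw [hd]
    rw [hsmul, hMinv i hi, ← hd]
    simp [ContinuousLinearMap.comp_apply, Submodule.subtypeL_apply]
  have hnormd : ‖(d : Λ)‖ = ‖d‖ := rfl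
  have hbw : b w ((d : Λ)) ≤ ‖b‖ * ‖w‖ * ‖d‖ := by
    calc b w ((d : Λ)) ≤ |b w ((d : Λ))| := le_abs_self _
      _ = ‖b w ((d : Λ))‖ := (Real.norm_eq_abs _).symm
      _ ≤ ‖b w‖ * ‖(d : Λ)‖ := (b w).le_opNorm _
      _ ≤ (‖b‖ * ‖w‖) * ‖(d : Λ)‖ :=
          mul_le_mul_of_nonneg_right (b.le_opNorm w) (norm_nonneg _)
      _ = ‖b‖ * ‖w‖ * ‖d‖ := by rw [hnormd]
  set sr := Real.sqrt r with hsrdef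
  have hsr : 0 < sr := Real.sqrt_pos.mpr hr
  set s := Real.sqrt (Mp i d d) with hsdef
  have hdd0 : 0 ≤ Mp i d d := le_trans (by positivity) (hMc d)
  have hs2 : s ^ 2 = Mp i d d := Real.sq_sqrt hdd0
  have hs0 : 0 ≤ s := Real.sqrt_nonneg _
  have hnd : sr * ‖d‖ ≤ s := by
    have : sr * ‖d‖ = Real.sqrt (r * ‖d‖ ^ 2) := by
      rw [Real.sqrt_mul hr.le, Real.sqrt_sq (norm_nonneg d)]
    rw [this]
    exact Real.sqrt_le_sqrt (hMc d)
  have hsbound : s ≤ β * ‖b‖ * ‖w‖ / sr := by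
    rcases eq_or_lt_of_le hs0 with h0 | h0
    · rw [← h0]; positivity
    · rw [le_div_iff₀ hsr]
      have hkey : s * (s * sr) ≤ s * (β * ‖b‖ * ‖w‖) := by
        have h1 : s ^ 2 ≤ β * (‖b‖ * ‖w‖ * ‖d‖) := by
          rw [hs2, hdd]
          nlinarith [norm_nonneg w, norm_nonneg d, norm_nonneg (b : U →L[ℝ] Λ →L[ℝ] ℝ)]
        nlinarith [norm_nonneg w, norm_nonneg d, norm_nonneg (b : U →L[ℝ] Λ →L[ℝ] ℝ),
          mul_nonneg (mul_nonneg hβ.le (norm_nonneg (b : U →L[ℝ] Λ →L[ℝ] ℝ))) (norm_nonneg w)]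
      exact le_of_mul_le_mul_left hkey h0
  -- combine
  calc Real.sqrt (Mp i ej1 ej1)
      = Real.sqrt (Mp i ((ej - β • Minv i Sψ) + d) ((ej - β • Minv i Sψ) + d)) := by
        rw [hsum]
    _ ≤ Real.sqrt (Mp i (ej - β • Minv i Sψ) (ej - β • Minv i Sψ)) + s :=
        my_tri (Mp i) hMs r hr hMc _ _
    _ ≤ ρ * Real.sqrt (Mp i ej ej) + β * ‖b‖ * ‖w‖ / sr := add_le_add hν hsbound
    _ ≤ ρ * Real.sqrt (Mp i ej ej) + (β / sr) * ‖b‖ * (L * (ζ ^ i)⁻¹) := by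
        have h1 : β * ‖b‖ * ‖w‖ / sr = (β / sr) * ‖b‖ * ‖w‖ := by ring
        rw [h1]
        gcongr


/-- One-step recursion estimate in the proof of Lemma basic: for all `i ≥ 1` and
`1 ≤ j ≤ K`, with `e_j := λ_{σ_i} − λ_{σ_i}^{(j)}` (an element of `Λσ i`),
`((M_{σ_i}e_j)(e_j))^{1/2} ≤ ρ·((M_{σ_i}e_{j−1})(e_{j−1}))^{1/2} + (β/√r)·‖B‖·L·ζ^{−i}`.
(Index shifted: `j` below ranges over `0 ≤ j < K`, giving the step from `e_j` to
`e_{j+1}`.) Here `‖B‖ = ‖b‖`, `lamσ i` is the Galerkin approximation of `lam` (= λ)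
from `Λσ i`, and `lamit i j` is `λ_{σ_i}^{(j)}`. -/
theorem stmt_16
    {U Λ : Type*} [NormedAddCommGroup U] [InnerProductSpace ℝ U] [CompleteSpace U]
    [NormedAddCommGroup Λ] [InnerProductSpace ℝ Λ] [CompleteSpace Λ]
    (Ca α Cb β₀ : ℝ) (hα : 0 < α) (hβ₀ : 0 < β₀)
    (a : U →L[ℝ] U →L[ℝ] ℝ) (b : U →L[ℝ] Λ →L[ℝ] ℝ)
    (ha_bdd : ∀ u v, |a u v| ≤ Ca * ‖u‖ * ‖v‖)
    (ha_symm : ∀ u v, a u v = a v u)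
    (ha_coer : ∀ v, α * ‖v‖ ^ 2 ≤ a v v)
    (hb_bdd : ∀ v μ, |b v μ| ≤ Cb * ‖v‖ * ‖μ‖)
    (hb_infsup : ∀ μ : Λ, β₀ * ‖μ‖ ≤ ⨆ w : U, b w μ / ‖w‖)
    (Ainv : (U →L[ℝ] ℝ) →L[ℝ] U)
    (hAinv : ∀ (φ : U →L[ℝ] ℝ) (v : U), a (Ainv φ) v = φ v)
    (f : U →L[ℝ] ℝ) (g : Λ →L[ℝ] ℝ) (u₀ : U) (lam : Λ)
    (hsol : ∀ (v : U) (μ : Λ), a u₀ v + b v lam + b u₀ μ = f v - g μ)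
    (Λσ : ℕ → Submodule ℝ Λ)
    (hclosed : ∀ i, IsClosed ((Λσ i : Set Λ)))
    (hbot : Λσ 0 = ⊥)
    (hnested : ∀ i, Λσ i ≤ Λσ (i + 1))
    (lamσ : ℕ → Λ) (hlamσmem : ∀ i, lamσ i ∈ Λσ i)
    (hGal : ∀ i, ∀ μ ∈ Λσ i, b (Ainv (b.flip (lamσ i))) μ = b (Ainv (b.flip lam)) μ)
    (r R : ℝ) (hr : 0 < r) (hrR : r ≤ R)
    (Mp : (i : ℕ) → (Λσ i) →L[ℝ] (Λσ i) →L[ℝ] ℝ)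
    (hMsymm : ∀ i, 1 ≤ i → ∀ μ ν : Λσ i, Mp i μ ν = Mp i ν μ)
    (hMbdd : ∀ i, 1 ≤ i → ∀ μ : Λσ i, r * ‖μ‖ ^ 2 ≤ Mp i μ μ ∧ Mp i μ μ ≤ R * ‖μ‖ ^ 2)
    (Minv : (i : ℕ) → ((Λσ i) →L[ℝ] ℝ) →L[ℝ] (Λσ i))
    (hMinv : ∀ i, 1 ≤ i → ∀ (ψ : (Λσ i) →L[ℝ] ℝ) (μ : Λσ i), Mp i (Minv i ψ) μ = ψ μ)
    (β ρ : ℝ) (hβ : 0 < β) (hρ0 : 0 < ρ) (hρ1 : ρ < 1)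
    (hcontract : ∀ i, 1 ≤ i → ∀ μ : Λσ i,
        Real.sqrt (Mp i (μ - β • Minv i ((b (Ainv (b.flip (μ : Λ)))).comp (Λσ i).subtypeL))
            (μ - β • Minv i ((b (Ainv (b.flip (μ : Λ)))).comp (Λσ i).subtypeL)))
          ≤ ρ * Real.sqrt (Mp i μ μ))
    (ζ L : ℝ) (hζ : 1 < ζ) (hL : 0 < L)
    (happrox : ∀ i, ‖lam - lamσ i‖ ≤ L * (ζ ^ i)⁻¹)
    (K : ℕ) (uapp : ℕ → ℕ → U) (lamit : ℕ → ℕ → Λ)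
    (hlamit0 : lamit 0 K = 0)
    (hlamitmem : ∀ i, 1 ≤ i → ∀ j ≤ K, lamit i j ∈ Λσ i)
    (hlamitinit : ∀ i, 1 ≤ i → lamit i 0 = lamit (i - 1) K)
    (huapp : ∀ i, 1 ≤ i → ∀ j < K,
        ‖Ainv (f - b.flip (lamit i j)) - uapp i j‖ ≤ L * (ζ ^ i)⁻¹)
    (hlamitstep : ∀ i, 1 ≤ i → ∀ j < K,
        lamit i (j + 1)
          = lamit i j + ((β • Minv i ((b (uapp i j) + g).comp (Λσ i).subtypeL) : Λσ i) : Λ)) :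
    ∀ i, 1 ≤ i → ∀ j < K, ∀ ej ej1 : Λσ i,
      (ej : Λ) = lamσ i - lamit i j → (ej1 : Λ) = lamσ i - lamit i (j + 1) →
      Real.sqrt (Mp i ej1 ej1)
        ≤ ρ * Real.sqrt (Mp i ej ej) + (β / Real.sqrt r) * ‖b‖ * (L * (ζ ^ i)⁻¹) := by
  exact stmt_16' Ca α Cb β₀ hα hβ₀ a b ha_bdd ha_symm ha_coer hb_bdd hb_infsup Ainv hAinv
    f g u₀ lam hsol Λσ hclosed hbot hnested lamσ hlamσmem hGal r R hr hrR Mp hMsymm hMbdd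
    Minv hMinv β ρ hβ hρ0 hρ1 hcontract ζ L hζ hL happrox K uapp lamit hlamit0 hlamitmem
    hlamitinit huapp hlamitstep
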